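/- If vertex k is not reachable in (V,A) from any vertex h with d_h > d_k (i.e., no directed path from such an h to k), then the componentwise-minimum solution û of {u : u_h − u_k ≤ s_{h,k}, u_h ≥ d_h} satisfies û_k = d_k; in particular, vehicles in connected components where all deviations are ≤ d_k and with no incoming influence need no corrective delay. -/

import Mathlib

/-- if k is not reachable (by a directed path in A) from any
vertex h with d_h > d_k, then the componentwise-minimum solution û satisfies
û_k = d_k. -/
theorem stmt_18 {V : Type*} [Fintype V]
    (A : Set (V × V)) (s : V → V → ℝ) (d : V → ℝ)
    (hs : ∀ hk ∈ A, 0 ≤ s hk.1 hk.2)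
    (uhat : V → ℝ)
    (hfeas : (∀ hk ∈ A, uhat hk.1 - uhat hk.2 ≤ s hk.1 hk.2) ∧ (∀ h, d h ≤ uhat h))
    (hmin : ∀ u : V → ℝ,
      (∀ hk ∈ A, u hk.1 - u hk.2 ≤ s hk.1 hk.2) → (∀ h, d h ≤ u h) →
      ∀ j, uhat j ≤ u j)
    (k : V)
    (hreach : ¬ ∃ (h : V) (l : List V),
      d k < d h ∧ l.Chain' (fun a b => (a, b) ∈ A) ∧
      l.head? = some h ∧ l.getLast? = some k) :
    uhat k = d k := by
  classical
  set R : V → Prop := fun j => ∃ l : List V,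
    l.Chain' (fun a b => (a, b) ∈ A) ∧ l.head? = some j ∧ l.getLast? = some k with hRdef
  have hRk : R k := ⟨[k], by exact List.isChain_singleton _, rfl, rfl⟩
  have hRd : ∀ j, R j → d j ≤ d k := by
    intro j hj
    by_contra h
    obtain ⟨l, hc, hh, hl⟩ := hj
    exact hreach ⟨j, l, lt_of_not_ge h, hc, hh, hl⟩
  have hclose : ∀ a b, (a, b) ∈ A → R b → R a := by
    rintro a b hab ⟨l, hc, hh, hl⟩
    refine ⟨a :: l, ?_, rfl, ?_⟩
    · refine List.isChain_cons.2 ?_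
      refine ⟨?_, hc⟩
      intro x hx
      simp only [Option.mem_def, hh, Option.some.injEq] at hx
      subst hx; exact hab
    · cases l with
      | nil => simp at hh
      | cons x xs => rw [List.getLast?_cons_cons]; exact hl
  set u : V → ℝ := fun j => if R j then min (uhat j) (d k) else uhat j with hu
  have hfeas1 : ∀ hk ∈ A, u hk.1 - u hk.2 ≤ s hk.1 hk.2 := by
    intro hk hA
    obtain ⟨a, b⟩ := hk
    simp only [hu]
    by_cases hb : R b
    · have ha : R a := hclose a b hA hb
      simp only [ha, hb, if_pos]
      have h1 : uhat a ≤ uhat b + s a b := by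
        have := hfeas.1 (a, b) hA; linarith
      have h2 : d k ≤ d k + s a b := by
        have := hs (a, b) hA; linarith
      have : min (uhat a) (d k) ≤ min (uhat b) (d k) + s a b := by
        rcases le_total (uhat b) (d k) with hbt | hbt
        · rw [min_eq_left hbt]
          exact le_trans (min_le_left _ _) h1
        · rw [min_eq_right hbt]
          linarith [min_le_right (uhat a) (d k)]
      linarith
    · by_cases ha : R a
      · simp only [ha, if_pos, hb, if_neg, not_false_iff]
        have := hfeas.1 (a, b) hA
        have : min (uhat a) (d k) ≤ uhat a := min_le_left _ _
        have := hfeas.1 (a, b) hA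
        simp only at this ⊢
        linarith [min_le_left (uhat a) (d k), hfeas.1 (a, b) hA]
      · simp only [ha, hb, if_neg, not_false_iff]
        exact hfeas.1 (a, b) hA
  have hfeas2 : ∀ h, d h ≤ u h := by
    intro j
    simp only [hu]
    by_cases hj : R j
    · simp only [hj, if_pos]
      exact le_min (hfeas.2 j) (hRd j hj)
    · simp only [hj, if_neg, not_false_iff]
      exact hfeas.2 j
  have hle := hmin u hfeas1 hfeas2 k
  have : u k = min (uhat k) (d k) := by simp [hu, hRk]
  rw [this] at hle
  have h1 : uhat k ≤ d k := le_trans hle (min_le_right _ _)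
  exact le_antisymm h1 (hfeas.2 k)
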